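/- Let H₁, H₂ be finite-dimensional real vector spaces each equipped with a symmetric positive semi-definite bilinear form E₁, E₂ respectively, and let L₁ : H₁ → H₁ and L₂ : H₂ → H₂ be linear operators such that Eᵢ(Lᵢ f, Lᵢ f) ≤ δᵢ Eᵢ(f,f) for all f ∈ Hᵢ (i = 1,2), for some δ₁, δ₂ ≥ 0. Then the tensor product operator satisfies (E₁ ⊗ E₂)((L₁⊗L₂) f, (L₁⊗L₂) f) ≤ δ₁ δ₂ (E₁ ⊗ E₂)(f, f) for every f ∈ H₁ ⊗ H₂. -/

import Mathlib

open TensorProduct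

open Module in
/-- A tensor product of two symmetric positive semidefinite bilinear forms is
positive semidefinite. -/
lemma tensor_psd_aux {H₁ H₂ : Type*}
    [AddCommGroup H₁] [Module ℝ H₁] [FiniteDimensional ℝ H₁]
    [AddCommGroup H₂] [Module ℝ H₂] [FiniteDimensional ℝ H₂]
    (A : H₁ →ₗ[ℝ] H₁ →ₗ[ℝ] ℝ) (B : H₂ →ₗ[ℝ] H₂ →ₗ[ℝ] ℝ)
    (hAs : ∀ v w, A v w = A w v) (hBs : ∀ v w, B v w = B w v)
    (hA : ∀ v, 0 ≤ A v v) (hB : ∀ v, 0 ≤ B v v)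
    (C : (H₁ ⊗[ℝ] H₂) →ₗ[ℝ] (H₁ ⊗[ℝ] H₂) →ₗ[ℝ] ℝ)
    (hC : ∀ (f₁ g₁ : H₁) (f₂ g₂ : H₂),
      C (f₁ ⊗ₜ f₂) (g₁ ⊗ₜ g₂) = A f₁ g₁ * B f₂ g₂)
    (f : H₁ ⊗[ℝ] H₂) : 0 ≤ C f f := by
  obtain ⟨b, hb⟩ := LinearMap.BilinForm.exists_orthogonal_basis
    (B := A) ⟨fun x y => hAs x y⟩
  obtain ⟨c, hc⟩ := LinearMap.BilinForm.exists_orthogonal_basis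
    (B := B) ⟨fun x y => hBs x y⟩
  set bb := Basis.tensorProduct b c with hbb
  set r := fun p => bb.repr f p with hr
  have hf : f = Finset.univ.sum (fun p => r p • bb p) := (bb.sum_repr f).symm
  rw [hf]
  simp only [map_sum, map_smul, LinearMap.sum_apply, LinearMap.smul_apply]
  refine Finset.sum_nonneg fun p _ => ?_
  rw [Finset.sum_eq_single p]
  · have hpp : bb p = b p.1 ⊗ₜ c p.2 := Basis.tensorProduct_apply' b c p
    rw [hpp, hC]
    have h1 : 0 ≤ A (b p.1) (b p.1) * B (c p.2) (c p.2) :=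
      mul_nonneg (hA _) (hB _)
    simp only [smul_eq_mul, ← mul_assoc]
    exact mul_nonneg (mul_nonneg (mul_self_nonneg _) (hA _)) (hB _)
  · intro q _ hq
    have hp' : bb p = b p.1 ⊗ₜ c p.2 := Basis.tensorProduct_apply' b c p
    have hq' : bb q = b q.1 ⊗ₜ c q.2 := Basis.tensorProduct_apply' b c q
    rw [hp', hq', hC]
    replace hb := LinearMap.isOrthoᵢ_def.mp hb
    replace hc := LinearMap.isOrthoᵢ_def.mp hc
    by_cases h1 : q.1 = p.1
    · have h2 : q.2 ≠ p.2 := fun h2 => hq (Prod.ext h1 h2)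
      simp [hc q.2 p.2 h2, hc p.2 q.2 (Ne.symm h2)]
    · simp [hb q.1 p.1 h1, hb p.1 q.1 (Ne.symm h1)]
  · intro h; exact absurd (Finset.mem_univ p) h

/-- Submultiplicativity of tensor products of operators with respect to symmetric
positive semi-definite bilinear forms.  `E` is the bilinear form on `H₁ ⊗ H₂`
determined on simple tensors by `(E₁⊗E₂)(f₁⊗f₂, g₁⊗g₂) = E₁(f₁,g₁)·E₂(f₂,g₂)`. -/
theorem stmt_3 (H₁ H₂ : Type*)
    [AddCommGroup H₁] [Module ℝ H₁] [FiniteDimensional ℝ H₁]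
    [AddCommGroup H₂] [Module ℝ H₂] [FiniteDimensional ℝ H₂]
    (E₁ : H₁ →ₗ[ℝ] H₁ →ₗ[ℝ] ℝ) (E₂ : H₂ →ₗ[ℝ] H₂ →ₗ[ℝ] ℝ)
    (hE₁symm : ∀ v w, E₁ v w = E₁ w v) (hE₂symm : ∀ v w, E₂ v w = E₂ w v)
    (hE₁psd : ∀ v, 0 ≤ E₁ v v) (hE₂psd : ∀ v, 0 ≤ E₂ v v)
    (L₁ : H₁ →ₗ[ℝ] H₁) (L₂ : H₂ →ₗ[ℝ] H₂) (δ₁ δ₂ : ℝ)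
    (hδ₁ : 0 ≤ δ₁) (hδ₂ : 0 ≤ δ₂)
    (hL₁ : ∀ f : H₁, E₁ (L₁ f) (L₁ f) ≤ δ₁ * E₁ f f)
    (hL₂ : ∀ f : H₂, E₂ (L₂ f) (L₂ f) ≤ δ₂ * E₂ f f)
    (E : (H₁ ⊗[ℝ] H₂) →ₗ[ℝ] (H₁ ⊗[ℝ] H₂) →ₗ[ℝ] ℝ)
    (hE : ∀ (f₁ g₁ : H₁) (f₂ g₂ : H₂),
      E (f₁ ⊗ₜ f₂) (g₁ ⊗ₜ g₂) = E₁ f₁ g₁ * E₂ f₂ g₂) :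
    ∀ f : H₁ ⊗[ℝ] H₂,
      E (TensorProduct.map L₁ L₂ f) (TensorProduct.map L₁ L₂ f) ≤ δ₁ * δ₂ * E f f := by
  intro f
  have hCa := tensor_psd_aux (δ₁ • E₁ - E₁.compl₁₂ L₁ L₁) (δ₂ • E₂)
    (fun v w => by
      simp only [LinearMap.sub_apply, LinearMap.smul_apply, LinearMap.compl₁₂_apply,
        smul_eq_mul]
      rw [hE₁symm v w, hE₁symm (L₁ v) (L₁ w)])
    (fun v w => by
      simp only [LinearMap.smul_apply, smul_eq_mul]
      rw [hE₂symm v w])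
    (fun v => by
      simp only [LinearMap.sub_apply, LinearMap.smul_apply, LinearMap.compl₁₂_apply,
        smul_eq_mul]
      linarith [hL₁ v])
    (fun v => by
      simp only [LinearMap.smul_apply, smul_eq_mul]
      exact mul_nonneg hδ₂ (hE₂psd v))
    (LinearMap.BilinForm.tmul (δ₁ • E₁ - E₁.compl₁₂ L₁ L₁) (δ₂ • E₂))
    (fun f₁ g₁ f₂ g₂ => by
      simp only [LinearMap.BilinForm.tensorDistrib_tmul, smul_eq_mul]
      ring) f
  have hCb := tensor_psd_aux (E₁.compl₁₂ L₁ L₁) (δ₂ • E₂ - E₂.compl₁₂ L₂ L₂)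
    (fun v w => by
      simp only [LinearMap.compl₁₂_apply]
      rw [hE₁symm (L₁ v) (L₁ w)])
    (fun v w => by
      simp only [LinearMap.sub_apply, LinearMap.smul_apply, LinearMap.compl₁₂_apply,
        smul_eq_mul]
      rw [hE₂symm v w, hE₂symm (L₂ v) (L₂ w)])
    (fun v => by
      simp only [LinearMap.compl₁₂_apply]
      exact hE₁psd (L₁ v))
    (fun v => by
      simp only [LinearMap.sub_apply, LinearMap.smul_apply, LinearMap.compl₁₂_apply,
        smul_eq_mul]
      linarith [hL₂ v])
    (LinearMap.BilinForm.tmul (E₁.compl₁₂ L₁ L₁) (δ₂ • E₂ - E₂.compl₁₂ L₂ L₂))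
    (fun f₁ g₁ f₂ g₂ => by
      simp only [LinearMap.BilinForm.tensorDistrib_tmul, smul_eq_mul]
      ring) f
  have hsum : LinearMap.BilinForm.tmul (δ₁ • E₁ - E₁.compl₁₂ L₁ L₁) (δ₂ • E₂)
      + LinearMap.BilinForm.tmul (E₁.compl₁₂ L₁ L₁) (δ₂ • E₂ - E₂.compl₁₂ L₂ L₂)
      = (δ₁ * δ₂) • E - E.compl₁₂ (TensorProduct.map L₁ L₂) (TensorProduct.map L₁ L₂) := by
    ext f₁ f₂ g₁ g₂
    simp only [LinearMap.add_apply, LinearMap.sub_apply, LinearMap.smul_apply,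
      LinearMap.compl₁₂_apply, LinearMap.BilinForm.tensorDistrib_tmul, smul_eq_mul,
      TensorProduct.map_tmul, hE, LinearMap.compr₂_apply, LinearMap.mk₂_apply,
      TensorProduct.AlgebraTensorModule.curry_apply, TensorProduct.curry_apply,
      LinearMap.coe_restrictScalars]
    ring
  have h3 := LinearMap.congr_fun (LinearMap.congr_fun hsum f) f
  simp only [LinearMap.add_apply, LinearMap.sub_apply, LinearMap.smul_apply,
    LinearMap.compl₁₂_apply, smul_eq_mul] at h3
  linarith [hCa, hCb, h3]
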